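/- Let 1 < p, q < ∞ and max{−n/p, −m/p} < α < min{n(1−1/p), m(1−1/p)}. Then for every rectangle R = Q₁×Q₂ (product of cubes in ℝⁿ and ℝᵐ), ‖χ_R‖_{K̇_{p,q}^{α}} · ‖χ_R‖_{K̇_{p',q'}^{−α}} ≈ |R|, with implicit constants independent of R. -/

import Mathlib

open MeasureTheory Set ENNReal NNReal
noncomputable section

/-- The product space ℝⁿ × ℝᵐ. -/
abbrev ED (n m : ℕ) := (Fin n → ℝ) × (Fin m → ℝ)

/-- The open cube `Q(x,r)` in ℝⁿ centered at `x` of side length `r`. -/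
def cube (n : ℕ) (x : Fin n → ℝ) (r : ℝ) : Set (Fin n → ℝ) :=
  {y | ∀ i, |y i - x i| < r / 2}

/-- The rectangle `R((x,y),r,s) = Q(x,r) × Q(y,s)`. -/
def rect (n m : ℕ) (x : Fin n → ℝ) (y : Fin m → ℝ) (r s : ℝ) : Set (ED n m) :=
  (cube n x r) ×ˢ (cube m y s)

/-- `R` is an axis-parallel rectangle (product of cubes with positive side lengths). -/
def IsRect (n m : ℕ) (R : Set (ED n m)) : Prop :=
  ∃ x y r s, 0 < r ∧ 0 < s ∧ R = rect n m x y r s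

/-- The dyadic product annulus `I_i × J_j`. -/
def prodAnnulus (n m : ℕ) (i j : ℤ) : Set (ED n m) :=
  ((cube n 0 ((2:ℝ)^i)) \ (cube n 0 ((2:ℝ)^(i-1)))) ×ˢ
    ((cube m 0 ((2:ℝ)^j)) \ (cube m 0 ((2:ℝ)^(j-1))))

/-- The dyadic rectangle `R_{i,j} = Q(0,2^i) × Q(0,2^j)`. -/
def dyadicRect (n m : ℕ) (i j : ℤ) : Set (ED n m) :=
  (cube n 0 ((2:ℝ)^i)) ×ˢ (cube m 0 ((2:ℝ)^j))

/-- `L^p` norm (for `0 < p < ∞`) of an `ℝ≥0∞`-valued function. -/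
def lpNormE (n m : ℕ) (p : ℝ) (f : ED n m → ℝ≥0∞) : ℝ≥0∞ :=
  (∫⁻ z : ED n m, f z ^ p) ^ (1/p)

/-- The product Herz norm `‖f‖_{K̇_{p,q}^α}` of an `ℝ≥0∞`-valued function. -/
def herzNorm (n m : ℕ) (α p q : ℝ) (f : ED n m → ℝ≥0∞) : ℝ≥0∞ :=
  (∑' i : ℤ, ∑' j : ℤ,
    (ENNReal.ofReal ((2:ℝ) ^ (((i:ℝ) + (j:ℝ)) * α)) *
      lpNormE n m p ((prodAnnulus n m i j).indicator f)) ^ q) ^ (1/q)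

/-- Lift of a real-valued function to `ℝ≥0∞` via the absolute value. -/
def liftE (n m : ℕ) (f : ED n m → ℝ) : ED n m → ℝ≥0∞ := fun z => (‖f z‖₊ : ℝ≥0∞)

/-- The product Herz norm of a real-valued function. -/
def herzNormR (n m : ℕ) (α p q : ℝ) (f : ED n m → ℝ) : ℝ≥0∞ :=
  herzNorm n m α p q (liftE n m f)

/-- The product Morrey-Herz norm `‖f‖_{MK̇_{p,q}^{α,λ}}` of an `ℝ≥0∞`-valued function. -/
def morreyHerzNorm (n m : ℕ) (α p q lam : ℝ) (f : ED n m → ℝ≥0∞) : ℝ≥0∞ :=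
  ⨆ L₁ : ℤ, ⨆ L₂ : ℤ,
    ENNReal.ofReal ((2:ℝ) ^ (-(((L₁:ℝ)) + (L₂:ℝ)) * lam)) *
      herzNorm n m α p q ((dyadicRect n m L₁ L₂).indicator f)

/-- The product Morrey-Herz norm of a real-valued function. -/
def morreyHerzNormR (n m : ℕ) (α p q lam : ℝ) (f : ED n m → ℝ) : ℝ≥0∞ :=
  morreyHerzNorm n m α p q lam (liftE n m f)

/-- A product Herz-block: supported in a dyadic rectangle `R_{l₁,l₂}`
with Herz norm at most `2^{-λ(l₁+l₂)}`. -/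
def IsHerzBlock (n m : ℕ) (α p q lam : ℝ) (b : ED n m → ℝ) : Prop :=
  ∃ l₁ l₂ : ℤ, (∀ z ∉ dyadicRect n m l₁ l₂, b z = 0) ∧
    herzNormR n m α p q b ≤ ENNReal.ofReal ((2:ℝ) ^ (-(lam * ((l₁:ℝ) + (l₂:ℝ)))))

/-- Membership in the product block-Herz space `BK̇_{p,q}^{α,λ}`. -/
def MemBlockHerz (n m : ℕ) (α p q lam : ℝ) (f : ED n m → ℝ) : Prop :=
  ∃ (c : ℕ → ℝ) (b : ℕ → ED n m → ℝ),
    (∀ k, IsHerzBlock n m α p q lam (b k)) ∧ (Summable fun k => |c k|) ∧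
    (∀ z, HasSum (fun k => c k * b k z) (f z))

/-- The product block-Herz norm: infimum of `Σ|λ_k|` over decompositions into blocks. -/
def blockHerzNorm (n m : ℕ) (α p q lam : ℝ) (f : ED n m → ℝ) : ℝ≥0∞ :=
  sInf { S : ℝ≥0∞ | ∃ (c : ℕ → ℝ) (b : ℕ → ED n m → ℝ),
    (∀ k, IsHerzBlock n m α p q lam (b k)) ∧ (Summable fun k => |c k|) ∧
    (∀ z, HasSum (fun k => c k * b k z) (f z)) ∧
    S = ENNReal.ofReal (∑' k, |c k|) }

/-- The strong maximal operator on `ℝ≥0∞`-valued functions. -/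
def msE (n m : ℕ) (f : ED n m → ℝ≥0∞) (z : ED n m) : ℝ≥0∞ :=
  ⨆ (x : Fin n → ℝ) (y : Fin m → ℝ) (r : ℝ) (s : ℝ)
    (_ : 0 < r) (_ : 0 < s) (_ : z ∈ rect n m x y r s),
      (volume (rect n m x y r s))⁻¹ * ∫⁻ w in rect n m x y r s, f w

/-- The strong maximal operator of a real-valued function. -/
def msR (n m : ℕ) (f : ED n m → ℝ) : ED n m → ℝ≥0∞ := msE n m (liftE n m f)

/-- The indicator (characteristic) function of a set, real-valued. -/
def herzChar (n m : ℕ) (S : Set (ED n m)) : ED n m → ℝ := S.indicator 1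

/-- Conjugate exponent `p' = p/(p-1)`. -/
def rconj (p : ℝ) : ℝ := p / (p - 1)

namespace HP
open Real

/-- 2-power weight in `ℝ≥0∞`. -/
def w (e : ℝ) : ℝ≥0∞ := ENNReal.ofReal ((2:ℝ) ^ e)

lemma two_rpow_pos (e : ℝ) : (0:ℝ) < (2:ℝ) ^ e := Real.rpow_pos_of_pos two_pos e

lemma w_mul (a b : ℝ) : w a * w b = w (a + b) := by
  rw [w, w, w, ← ENNReal.ofReal_mul (two_rpow_pos a).le, ← Real.rpow_add two_pos]

lemma w_rpow (a b : ℝ) : w a ^ b = w (a * b) := by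
  rw [w, w, ENNReal.ofReal_rpow_of_pos (two_rpow_pos a), ← Real.rpow_mul (by norm_num)]

lemma w_mono {a b : ℝ} (h : a ≤ b) : w a ≤ w b :=
  ENNReal.ofReal_le_ofReal ((Real.rpow_le_rpow_left_iff one_lt_two).2 h)

lemma w_ne_top (a : ℝ) : w a ≠ ∞ := ENNReal.ofReal_ne_top

lemma w_zero : w 0 = 1 := by simp [w]

lemma w_lt_one {a : ℝ} (ha : a < 0) : w a < 1 :=
  ENNReal.ofReal_lt_one.2 (Real.rpow_lt_one_of_one_lt_of_neg one_lt_two ha)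

/-- Geometric sum bound: `∑_{i ≤ N} 2^{ic} ≤ 2^{Nc} (1 - 2^{-c})⁻¹`. -/
lemma tsum_w_le (c : ℝ) (N : ℤ) :
    (∑' i : ℤ, if i ≤ N then w ((i:ℝ) * c) else 0) ≤ w ((N:ℝ) * c) * (1 - w (-c))⁻¹ := by
  set f : ℤ → ℝ≥0∞ := fun i => if i ≤ N then w ((i:ℝ) * c) else 0 with hf
  have hinj : Function.Injective (fun k : ℕ => N - (k:ℤ)) := by
    intro a b hab
    simpa using hab
  have hsupp : Function.support f ⊆ Set.range (fun k : ℕ => N - (k:ℤ)) := by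
    intro i hi
    have : i ≤ N := by
      by_contra h
      simp [hf, h] at hi
    refine ⟨(N - i).toNat, ?_⟩
    simp only []
    omega
  have := hinj.tsum_eq hsupp
  rw [← this]
  have hterm : ∀ k : ℕ, f (N - (k:ℤ)) = w ((N:ℝ) * c) * (w (-c)) ^ (k:ℕ) := by
    intro k
    have h1 : ((N - (k:ℤ) : ℤ) : ℝ) * c = (N:ℝ) * c + (-c) * k := by push_cast; ring
    have h2 : (w (-c)) ^ (k:ℕ) = w ((-c) * k) := by
      rw [← ENNReal.rpow_natCast (w (-c)) k, w_rpow]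
    simp only [hf]
    rw [if_pos (by omega), h1, ← w_mul, h2]
  calc (∑' k : ℕ, f (N - (k:ℤ))) = ∑' k : ℕ, w ((N:ℝ) * c) * (w (-c)) ^ (k:ℕ) :=
        tsum_congr hterm
    _ = w ((N:ℝ) * c) * ∑' k : ℕ, (w (-c)) ^ (k:ℕ) := ENNReal.tsum_mul_left
    _ = w ((N:ℝ) * c) * (1 - w (-c))⁻¹ := by rw [ENNReal.tsum_geometric]
    _ ≤ w ((N:ℝ) * c) * (1 - w (-c))⁻¹ := le_rfl

lemma cube_eq_pi (n : ℕ) (x : Fin n → ℝ) (r : ℝ) :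
    cube n x r = Set.pi Set.univ (fun i => Ioo (x i - r/2) (x i + r/2)) := by
  ext y
  simp only [cube, mem_setOf_eq, Set.mem_pi, Set.mem_univ, forall_true_left, mem_Ioo]
  refine forall_congr' fun i => ?_
  rw [abs_sub_lt_iff]
  constructor <;> intro h <;> constructor <;> linarith [h.1, h.2]

lemma measurableSet_cube (n : ℕ) (x : Fin n → ℝ) (r : ℝ) : MeasurableSet (cube n x r) := by
  rw [cube_eq_pi]
  exact MeasurableSet.univ_pi fun i => measurableSet_Ioo

lemma volume_cube (n : ℕ) (x : Fin n → ℝ) (r : ℝ) :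
    volume (cube n x r) = ENNReal.ofReal r ^ n := by
  rw [cube_eq_pi, volume_pi_pi]
  simp [Real.volume_Ioo]

lemma mem_cube_zero {n : ℕ} (hn : 0 < n) {y : Fin n → ℝ} {r : ℝ} :
    y ∈ cube n 0 r ↔ ‖y‖ < r / 2 := by
  have : Nonempty (Fin n) := ⟨⟨0, hn⟩⟩
  rcases le_or_gt (r/2) 0 with h | h
  · constructor
    · intro hy
      have h1 := hy (Classical.arbitrary _)
      simp only [Pi.zero_apply, sub_zero] at h1
      exact absurd h1 (by push_neg; exact le_trans h (abs_nonneg _))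
    · intro hy
      exact absurd hy (by push_neg; exact le_trans h (norm_nonneg y))
  · rw [pi_norm_lt_iff h]
    simp [cube, Real.norm_eq_abs]

lemma mem_cube_iff {n : ℕ} (hn : 0 < n) {x y : Fin n → ℝ} {r : ℝ} :
    y ∈ cube n x r ↔ ‖y - x‖ < r / 2 := by
  rw [← mem_cube_zero hn (y := y - x)]
  simp [cube, Pi.sub_apply]

/-- The one-parameter dyadic annulus. -/
def annN (n : ℕ) (i : ℤ) : Set (Fin n → ℝ) :=
  cube n 0 ((2:ℝ)^i) \ cube n 0 ((2:ℝ)^(i-1))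

lemma measurableSet_annN (n : ℕ) (i : ℤ) : MeasurableSet (annN n i) :=
  (measurableSet_cube _ _ _).diff (measurableSet_cube _ _ _)

lemma mem_annN {n : ℕ} (hn : 0 < n) {z : Fin n → ℝ} {i : ℤ} :
    z ∈ annN n i ↔ (2:ℝ)^(i-1) / 2 ≤ ‖z‖ ∧ ‖z‖ < (2:ℝ)^i / 2 := by
  rw [annN, Set.mem_diff, mem_cube_zero hn, mem_cube_zero hn]
  constructor
  · rintro ⟨h1, h2⟩; exact ⟨not_lt.1 h2, h1⟩
  · rintro ⟨h1, h2⟩; exact ⟨h2, not_lt.2 h1⟩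

lemma annN_disjoint (n : ℕ) (hn : 0 < n) : Pairwise (Function.onFun Disjoint (annN n)) := by
  intro i j hij
  wlog h : i < j generalizing i j
  · exact (this hij.symm (by omega)).symm
  rw [Function.onFun, Set.disjoint_left]
  intro z hzi hzj
  rw [mem_annN hn] at hzi hzj
  have h2 : (2:ℝ)^i / 2 ≤ (2:ℝ)^(j-1) / 2 := by
    have := zpow_le_zpow_right₀ (one_le_two (α := ℝ)) (by omega : i ≤ j - 1)
    linarith
  linarith [hzi.2, hzj.1]

lemma iUnion_annN {n : ℕ} (hn : 0 < n) {z : Fin n → ℝ} (hz : z ≠ 0) :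
    ∃ i : ℤ, z ∈ annN n i := by
  have hz' : 0 < ‖z‖ := norm_pos_iff.2 hz
  obtain ⟨k, hk⟩ := exists_mem_Ico_zpow hz' one_lt_two
  refine ⟨k + 2, ?_⟩
  rw [mem_annN hn]
  have e1 : (2:ℝ)^(k+2-1) = 2^(k+1) := by ring_nf
  have e2 : ((2:ℝ)^(k+1) : ℝ) = 2^k * 2 := by rw [zpow_add_one₀ (two_ne_zero)]
  have e3 : ((2:ℝ)^(k+2) : ℝ) = 2^(k+1) * 2 := by
    rw [show k+2 = (k+1)+1 by ring, zpow_add_one₀ (two_ne_zero (α := ℝ))]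
  constructor
  · rw [e1, e2]; linarith [hk.1]
  · rw [e3]; linarith [hk.2]

lemma volume_eq_tsum_annN {n : ℕ} (hn : 0 < n) {S : Set (Fin n → ℝ)}
    (hS : MeasurableSet S) :
    volume S = ∑' i : ℤ, volume (S ∩ annN n i) := by
  have hne : Nonempty (Fin n) := ⟨⟨0, hn⟩⟩
  have h0 : volume ({0} : Set (Fin n → ℝ)) = 0 := measure_singleton 0
  have hcover : S \ {0} = ⋃ i : ℤ, S ∩ annN n i := by
    ext z
    simp only [Set.mem_diff, Set.mem_singleton_iff, Set.mem_iUnion, Set.mem_inter_iff]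
    constructor
    · rintro ⟨hzS, hz0⟩
      obtain ⟨i, hi⟩ := iUnion_annN hn hz0
      exact ⟨i, hzS, hi⟩
    · rintro ⟨i, hzS, hzi⟩
      refine ⟨hzS, ?_⟩
      intro h0'
      rw [mem_annN hn, h0'] at hzi
      simp at hzi
      linarith [zpow_pos (two_pos (α := ℝ)) (i-1), hzi.1]
  calc volume S = volume (S \ {0}) := (measure_diff_null h0).symm
    _ = ∑' i : ℤ, volume (S ∩ annN n i) := by
        rw [hcover, measure_iUnion ?_ fun i => hS.inter (measurableSet_annN n i)]
        intro i j hij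
        exact Disjoint.mono inter_subset_right inter_subset_right (annN_disjoint n hn hij)

/-- One-parameter Herz functional. -/
def K1 (n : ℕ) (α p q : ℝ) (Q : Set (Fin n → ℝ)) : ℝ≥0∞ :=
  (∑' i : ℤ, (w ((i:ℝ) * α) * volume (Q ∩ annN n i) ^ (1/p)) ^ q) ^ (1/q)

lemma liftE_herzChar (n m : ℕ) (R : Set (ED n m)) :
    liftE n m (herzChar n m R) = R.indicator (fun _ => (1:ℝ≥0∞)) := by
  funext z
  by_cases hz : z ∈ R <;> simp [liftE, herzChar, Set.indicator, hz]

lemma lpNormE_char {n m : ℕ} {p : ℝ} (hp : 0 < p) (A R : Set (ED n m))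
    (h : MeasurableSet (A ∩ R)) :
    lpNormE n m p (A.indicator (R.indicator (fun _ => (1:ℝ≥0∞)))) =
      volume (A ∩ R) ^ (1/p) := by
  rw [lpNormE]
  congr 1
  have hpt : ∀ z, (A.indicator (R.indicator (fun _ => (1:ℝ≥0∞))) z) ^ p =
      (A ∩ R).indicator (fun _ => (1:ℝ≥0∞)) z := by
    intro z
    rw [Set.indicator_indicator]
    by_cases hz : z ∈ A ∩ R
    · simp [hz]
    · simp [hz, ENNReal.zero_rpow_of_pos hp]
  simp_rw [hpt]
  exact lintegral_indicator_one h

lemma prodAnnulus_eq (n m : ℕ) (i j : ℤ) :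
    prodAnnulus n m i j = (annN n i) ×ˢ (annN m j) := rfl

lemma herzNormR_rect {n m : ℕ} {α p q : ℝ} (hp : 0 < p) (hq : 0 < q)
    (x : Fin n → ℝ) (y : Fin m → ℝ) (r s : ℝ) :
    herzNormR n m α p q (herzChar n m (rect n m x y r s)) =
      K1 n α p q (cube n x r) * K1 m α p q (cube m y s) := by
  rw [herzNormR, herzNorm, liftE_herzChar]
  have hterm : ∀ i j : ℤ,
      (ENNReal.ofReal ((2:ℝ) ^ (((i:ℝ) + (j:ℝ)) * α)) *
        lpNormE n m p ((prodAnnulus n m i j).indicator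
          ((rect n m x y r s).indicator (fun _ => (1:ℝ≥0∞))))) ^ q =
      ((w ((i:ℝ) * α) * volume (cube n x r ∩ annN n i) ^ (1/p)) ^ q) *
      ((w ((j:ℝ) * α) * volume (cube m y s ∩ annN m j) ^ (1/p)) ^ q) := by
    intro i j
    have hmeas : MeasurableSet (prodAnnulus n m i j ∩ rect n m x y r s) := by
      rw [prodAnnulus_eq, rect, Set.prod_inter_prod]
      exact ((measurableSet_annN n i).inter (measurableSet_cube n x r)).prod
        ((measurableSet_annN m j).inter (measurableSet_cube m y s))
    rw [lpNormE_char hp _ _ hmeas]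
    have hvol : volume (prodAnnulus n m i j ∩ rect n m x y r s) =
        volume (cube n x r ∩ annN n i) * volume (cube m y s ∩ annN m j) := by
      rw [prodAnnulus_eq, rect, Set.prod_inter_prod, Measure.volume_eq_prod,
        Measure.prod_prod, Set.inter_comm (annN n i), Set.inter_comm (annN m j)]
    have hw : ENNReal.ofReal ((2:ℝ) ^ (((i:ℝ) + (j:ℝ)) * α)) =
        w ((i:ℝ) * α) * w ((j:ℝ) * α) := by
      rw [w_mul]; congr 1; ring
    rw [hvol, hw, ENNReal.mul_rpow_of_nonneg _ _ (by positivity : (0:ℝ) ≤ 1/p)]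
    rw [show w ((i:ℝ)*α) * w ((j:ℝ)*α) *
        (volume (cube n x r ∩ annN n i) ^ (1/p) * volume (cube m y s ∩ annN m j) ^ (1/p)) =
        (w ((i:ℝ)*α) * volume (cube n x r ∩ annN n i) ^ (1/p)) *
        (w ((j:ℝ)*α) * volume (cube m y s ∩ annN m j) ^ (1/p)) by ring]
    rw [ENNReal.mul_rpow_of_nonneg _ _ hq.le]
  simp_rw [hterm, ENNReal.tsum_mul_left, ENNReal.tsum_mul_right]
  rw [ENNReal.mul_rpow_of_nonneg _ _ (by positivity : (0:ℝ) ≤ 1/q)]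
  rfl

lemma tsum_holder {q q' : ℝ} (h : q.HolderConjugate q') (f g : ℤ → ℝ≥0∞) :
    ∑' i, f i * g i ≤ (∑' i, f i ^ q) ^ (1/q) * (∑' i, g i ^ q') ^ (1/q') := by
  have := ENNReal.lintegral_mul_le_Lp_mul_Lq (Measure.count : Measure ℤ) h
    (f := f) (g := g) measurable_from_top.aemeasurable measurable_from_top.aemeasurable
  simpa [lintegral_count, Pi.mul_apply] using this

lemma lower1D {n : ℕ} (hn : 0 < n) {α p q p' q' : ℝ} (hpc : p.HolderConjugate p')
    (hqc : q.HolderConjugate q') {Q : Set (Fin n → ℝ)} (hQ : MeasurableSet Q)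
    (hfin : volume Q ≠ ∞) :
    volume Q ≤ K1 n α p q Q * K1 n (-α) p' q' Q := by
  set v := fun i : ℤ => volume (Q ∩ annN n i) with hv
  have key : ∀ i : ℤ, v i =
      (w ((i:ℝ)*α) * v i ^ (1/p)) * (w ((i:ℝ)*(-α)) * v i ^ (1/p')) := by
    intro i
    have hp1 : (0:ℝ) < 1/p := by
      have := hpc.pos; positivity
    have hp2 : (0:ℝ) < 1/p' := by
      have := hpc.symm.pos; positivity
    have hsplit : v i ^ (1/p) * v i ^ (1/p') = v i := by
      rcases eq_or_ne (v i) 0 with h0 | h0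
      · rw [h0, ENNReal.zero_rpow_of_pos hp1, ENNReal.zero_rpow_of_pos hp2, mul_zero]
      · have htop : v i ≠ ∞ :=
          ne_top_of_le_ne_top hfin (measure_mono inter_subset_left)
        rw [← ENNReal.rpow_add _ _ h0 htop, one_div, one_div,
          hpc.inv_add_inv_eq_one, ENNReal.rpow_one]
    calc v i = 1 * (v i ^ (1/p) * v i ^ (1/p')) := by rw [hsplit, one_mul]
      _ = (w ((i:ℝ)*α) * w ((i:ℝ)*(-α))) * (v i ^ (1/p) * v i ^ (1/p')) := by
          rw [w_mul, show (i:ℝ)*α + (i:ℝ)*(-α) = 0 by ring, w_zero]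
      _ = (w ((i:ℝ)*α) * v i ^ (1/p)) * (w ((i:ℝ)*(-α)) * v i ^ (1/p')) := by ring
  calc volume Q = ∑' i : ℤ, v i := volume_eq_tsum_annN hn hQ
    _ = ∑' i : ℤ, (w ((i:ℝ)*α) * v i ^ (1/p)) * (w ((i:ℝ)*(-α)) * v i ^ (1/p')) :=
        tsum_congr key
    _ ≤ (∑' i : ℤ, (w ((i:ℝ)*α) * v i ^ (1/p)) ^ q) ^ (1/q) *
          (∑' i : ℤ, (w ((i:ℝ)*(-α)) * v i ^ (1/p')) ^ q') ^ (1/q') := tsum_holder hqc _ _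
    _ = K1 n α p q Q * K1 n (-α) p' q' Q := rfl

lemma w_intCast (i : ℤ) : w (i:ℝ) = ENNReal.ofReal ((2:ℝ)^i) := by
  rw [w, Real.rpow_intCast]

lemma vol_ann_le {n : ℕ} (Q : Set (Fin n → ℝ)) (i : ℤ) :
    volume (Q ∩ annN n i) ≤ w ((i:ℝ) * n) := by
  have h1 : volume (Q ∩ annN n i) ≤ volume (cube n 0 ((2:ℝ)^i)) := by
    refine measure_mono ?_
    exact le_trans inter_subset_right diff_subset
  rw [volume_cube] at h1
  refine le_trans h1 ?_
  rw [← w_intCast, ← ENNReal.rpow_natCast (w (i:ℝ)) n, w_rpow]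

lemma vmem_bound {n : ℕ} (hn : 0 < n) {x : Fin n → ℝ} {r : ℝ} {i : ℤ}
    (h : volume (cube n x r ∩ annN n i) ≠ 0) :
    (2:ℝ)^(i-1)/2 < ‖x‖ + r/2 ∧ ‖x‖ - r/2 < (2:ℝ)^i/2 := by
  obtain ⟨z, hz1, hz2⟩ := nonempty_of_measure_ne_zero h
  rw [mem_cube_iff hn] at hz1
  rw [mem_annN hn] at hz2
  have e1 : x + (z - x) = z := by ring
  have e2 : z - (z - x) = x := by ring
  have h1 : ‖z‖ ≤ ‖x‖ + ‖z - x‖ := by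
    conv_lhs => rw [← e1]
    exact norm_add_le _ _
  have h2 : ‖x‖ ≤ ‖z‖ + ‖z - x‖ := by
    conv_lhs => rw [← e2]
    exact norm_sub_le _ _
  exact ⟨by linarith [hz2.1], by linarith [hz2.2]⟩

lemma K1_le_of_bound {n : ℕ} {α p q c : ℝ} (hq : 0 < q) {Q : Set (Fin n → ℝ)} {N : ℤ}
    (hbd : ∀ i : ℤ, (w ((i:ℝ)*α) * volume (Q ∩ annN n i) ^ (1/p)) ^ q ≤
      (if i ≤ N then w ((i:ℝ)*c) else 0)) :
    K1 n α p q Q ≤ w ((N:ℝ)*(c/q)) * ((1 - w (-c))⁻¹) ^ (1/q) := by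
  have h1 : K1 n α p q Q ≤ (w ((N:ℝ)*c) * (1 - w (-c))⁻¹) ^ (1/q) := by
    rw [K1]
    refine ENNReal.rpow_le_rpow ?_ (by positivity)
    exact le_trans (ENNReal.tsum_le_tsum hbd) (tsum_w_le c N)
  refine le_trans h1 ?_
  rw [ENNReal.mul_rpow_of_nonneg _ _ (by positivity : (0:ℝ) ≤ 1/q), w_rpow,
    show ((N:ℝ)*c)*(1/q) = (N:ℝ)*(c/q) by ring]

/-- 1D upper bound. -/
lemma upper1D {n : ℕ} (hn : 0 < n) {α p q p' q' : ℝ}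
    (hpc : p.HolderConjugate p') (hqc : q.HolderConjugate q')
    (hb : 0 < α + n/p) (hb' : 0 < -α + n/p') :
    ∃ C : ℝ≥0∞, C ≠ ∞ ∧ ∀ (x : Fin n → ℝ) (r : ℝ), 0 < r →
      K1 n α p q (cube n x r) * K1 n (-α) p' q' (cube n x r) ≤
        C * ENNReal.ofReal r ^ n := by
  have hp0 : (0:ℝ) < p := hpc.pos
  have hp'0 : (0:ℝ) < p' := hpc.symm.pos
  have hq0 : (0:ℝ) < q := hqc.pos
  have hq'0 : (0:ℝ) < q' := hqc.symm.pos
  set c₁ : ℝ := (α + n/p) * q with hc₁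
  set c₂ : ℝ := (-α + n/p') * q' with hc₂
  have hc₁0 : 0 < c₁ := by positivity
  have hc₂0 : 0 < c₂ := by positivity
  set D1 : ℝ≥0∞ := ((1 - w (-c₁))⁻¹) ^ (1/q) with hD1
  set D2 : ℝ≥0∞ := ((1 - w (-c₂))⁻¹) ^ (1/q') with hD2
  have hD1top : D1 ≠ ∞ := by
    refine ENNReal.rpow_ne_top_of_nonneg (by positivity) ?_
    rw [ENNReal.inv_ne_top]
    simpa [tsub_eq_zero_iff_le] using (w_lt_one (by linarith)).not_ge
  have hD2top : D2 ≠ ∞ := by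
    refine ENNReal.rpow_ne_top_of_nonneg (by positivity) ?_
    rw [ENNReal.inv_ne_top]
    simpa [tsub_eq_zero_iff_le] using (w_lt_one (by linarith)).not_ge
  set C1 : ℝ≥0∞ := D1 * D2 * (ENNReal.ofReal 6)^n with hC1
  set C2 : ℝ≥0∞ := 3 * w (4*|α|) with hC2
  refine ⟨C1 + C2, by
    simp only [ENNReal.add_ne_top]
    exact ⟨ENNReal.mul_ne_top (ENNReal.mul_ne_top hD1top hD2top)
      (ENNReal.pow_ne_top ENNReal.ofReal_ne_top),
      ENNReal.mul_ne_top (by norm_num) (w_ne_top _)⟩, ?_⟩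
  intro x r hr
  set V : ℤ → ℝ≥0∞ := fun i => volume (cube n x r ∩ annN n i) with hV
  rcases le_or_gt ‖x‖ r with hcase | hcase
  · -- Case 1 : cube near the origin
    obtain ⟨N, hN⟩ := exists_mem_Ico_zpow (by linarith : (0:ℝ) < 6*r) one_lt_two
    have hsupp : ∀ i : ℤ, V i ≠ 0 → i ≤ N := by
      intro i hi
      have h1 := (vmem_bound hn hi).1
      by_contra hcon
      push_neg at hcon
      have h2 : (2:ℝ)^(N+1) ≤ 2^(i-1) * 2 := by
        rw [show (2:ℝ)^(i-1) * 2 = 2^(i-1) * 2^(1:ℤ) by norm_num,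
          ← zpow_add₀ (two_ne_zero (α := ℝ))]
        exact zpow_le_zpow_right₀ one_le_two (by omega)
      have h3 : 6 * r < (2:ℝ)^(N+1) := hN.2
      linarith
    have hbd1 : ∀ i : ℤ, (w ((i:ℝ)*α) * V i ^ (1/p)) ^ q ≤
        (if i ≤ N then w ((i:ℝ)*c₁) else 0) := by
      intro i
      by_cases hiN : i ≤ N
      · rw [if_pos hiN]
        have hvb : V i ^ (1/p) ≤ w ((i:ℝ) * (n/p)) := by
          have := ENNReal.rpow_le_rpow (vol_ann_le (cube n x r) i)
            (by positivity : (0:ℝ) ≤ 1/p)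
          rw [w_rpow] at this
          rwa [show (i:ℝ) * n * (1/p) = (i:ℝ) * (n/p) by ring] at this
        calc (w ((i:ℝ)*α) * V i ^ (1/p)) ^ q
            ≤ (w ((i:ℝ)*α) * w ((i:ℝ) * (n/p))) ^ q :=
              ENNReal.rpow_le_rpow (mul_le_mul_right hvb _) hq0.le
          _ = w ((i:ℝ)*c₁) := by
              rw [w_mul, w_rpow, hc₁]; congr 1; ring
      · rw [if_neg hiN]
        have hv0 : V i = 0 := by
          by_contra hcon
          exact hiN (hsupp i hcon)
        rw [hv0, ENNReal.zero_rpow_of_pos (by positivity), mul_zero,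
          ENNReal.zero_rpow_of_pos hq0]
    have hbd2 : ∀ i : ℤ, (w ((i:ℝ)*(-α)) * V i ^ (1/p')) ^ q' ≤
        (if i ≤ N then w ((i:ℝ)*c₂) else 0) := by
      intro i
      by_cases hiN : i ≤ N
      · rw [if_pos hiN]
        have hvb : V i ^ (1/p') ≤ w ((i:ℝ) * (n/p')) := by
          have := ENNReal.rpow_le_rpow (vol_ann_le (cube n x r) i)
            (by positivity : (0:ℝ) ≤ 1/p')
          rw [w_rpow] at this
          rwa [show (i:ℝ) * n * (1/p') = (i:ℝ) * (n/p') by ring] at this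
        calc (w ((i:ℝ)*(-α)) * V i ^ (1/p')) ^ q'
            ≤ (w ((i:ℝ)*(-α)) * w ((i:ℝ) * (n/p'))) ^ q' :=
              ENNReal.rpow_le_rpow (mul_le_mul_right hvb _) hq'0.le
          _ = w ((i:ℝ)*c₂) := by
              rw [w_mul, w_rpow, hc₂]; congr 1; ring
      · rw [if_neg hiN]
        have hv0 : V i = 0 := by
          by_contra hcon
          exact hiN (hsupp i hcon)
        rw [hv0, ENNReal.zero_rpow_of_pos (by positivity), mul_zero,
          ENNReal.zero_rpow_of_pos hq'0]
    have hK1 := K1_le_of_bound hq0 hbd1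
    have hK2 := K1_le_of_bound hq'0 hbd2
    have e1 : c₁ / q = α + n/p := by
      rw [hc₁, mul_div_assoc, div_self hq0.ne', mul_one]
    have e2 : c₂ / q' = -α + n/p' := by
      rw [hc₂, mul_div_assoc, div_self hq'0.ne', mul_one]
    rw [e1] at hK1
    rw [e2] at hK2
    calc K1 n α p q (cube n x r) * K1 n (-α) p' q' (cube n x r)
        ≤ (w ((N:ℝ)*(α + n/p)) * D1) * (w ((N:ℝ)*(-α + n/p')) * D2) :=
          mul_le_mul' hK1 hK2
      _ = w ((N:ℝ) * n) * (D1 * D2) := by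
          have h11 : 1/p + 1/p' = 1 := by
            rw [one_div, one_div]; exact hpc.inv_add_inv_eq_one
          have hexp : (N:ℝ)*(α + n/p) + (N:ℝ)*(-α + n/p') = (N:ℝ) * n := by
            calc (N:ℝ)*(α + n/p) + (N:ℝ)*(-α + n/p') = (N:ℝ)*n*(1/p+1/p') := by ring
              _ = (N:ℝ) * n := by rw [h11, mul_one]
          rw [show (w ((N:ℝ)*(α + n/p)) * D1) * (w ((N:ℝ)*(-α + n/p')) * D2) =
            (w ((N:ℝ)*(α + n/p)) * w ((N:ℝ)*(-α + n/p'))) * (D1 * D2) by ring, w_mul, hexp]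
      _ ≤ (ENNReal.ofReal 6)^n * ENNReal.ofReal r ^ n * (D1 * D2) := by
          refine mul_le_mul_left ?_ _
          have hwN : w (N:ℝ) ≤ ENNReal.ofReal (6*r) := by
            rw [w_intCast]
            exact ENNReal.ofReal_le_ofReal hN.1
          have hwn : w ((N:ℝ) * n) = (w (N:ℝ))^n := by
            rw [← ENNReal.rpow_natCast (w (N:ℝ)) n, w_rpow]
          rw [ENNReal.ofReal_mul (by norm_num : (0:ℝ) ≤ 6)] at hwN
          rw [hwn, ← mul_pow]
          exact pow_le_pow_left' hwN n
      _ = C1 * ENNReal.ofReal r ^ n := by rw [hC1]; ring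
      _ ≤ (C1 + C2) * ENNReal.ofReal r ^ n := mul_le_mul_left le_self_add _
  · -- Case 2 : cube far from the origin
    have ht0 : (0:ℝ) < ‖x‖ := lt_trans hr hcase
    obtain ⟨M, hM⟩ := exists_mem_Ico_zpow ht0 one_lt_two
    have hsupp : ∀ i : ℤ, V i ≠ 0 → i = M+1 ∨ i = M+2 ∨ i = M+3 := by
      intro i hi
      obtain ⟨h1, h2⟩ := vmem_bound hn hi
      have hiu : i ≤ M + 3 := by
        by_contra hcon
        push_neg at hcon
        have h3 : (2:ℝ)^(M+3) ≤ 2^(i-1) := zpow_le_zpow_right₀ one_le_two (by omega)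
        have h4 : (2:ℝ)^(M+3) = 2^(M+1) * 4 := by
          rw [show M+3 = (M+1) + 2 by ring, zpow_add₀ (two_ne_zero (α := ℝ))]
          norm_num
        have h5 : ‖x‖ < (2:ℝ)^(M+1) := hM.2
        linarith
      have hil : M + 1 ≤ i := by
        by_contra hcon
        push_neg at hcon
        have h3 : (2:ℝ)^i ≤ 2^M := zpow_le_zpow_right₀ one_le_two (by omega)
        have h5 : (2:ℝ)^M ≤ ‖x‖ := hM.1
        linarith
      omega
    have habs : ∀ i : ℤ, (i = M+1 ∨ i = M+2 ∨ i = M+3) →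
        ((i:ℝ) * α ≤ ((M:ℝ)+1) * α + 2*|α|) ∧
        ((i:ℝ) * (-α) ≤ ((M:ℝ)+1) * (-α) + 2*|α|) := by
      intro i hi
      rcases hi with rfl | rfl | rfl <;>
        constructor <;> push_cast <;> nlinarith [le_abs_self α, neg_abs_le α, abs_nonneg α]
    have hVle : ∀ i : ℤ, V i ≤ ENNReal.ofReal r ^ n := by
      intro i
      refine le_trans (measure_mono inter_subset_left) ?_
      rw [volume_cube]
    set ρ : ℝ≥0∞ := (ENNReal.ofReal r ^ n) ^ (1/p) with hρ
    set ρ' : ℝ≥0∞ := (ENNReal.ofReal r ^ n) ^ (1/p') with hρ'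
    set A : ℝ≥0∞ := w (((M:ℝ)+1) * α + 2*|α|) with hA
    set A' : ℝ≥0∞ := w (((M:ℝ)+1) * (-α) + 2*|α|) with hA'
    have hterm1 : ∀ i : ℤ, (w ((i:ℝ)*α) * V i ^ (1/p)) ^ q ≤
        (if i = M+1 ∨ i = M+2 ∨ i = M+3 then (A * ρ) ^ q else 0) := by
      intro i
      by_cases hi : i = M+1 ∨ i = M+2 ∨ i = M+3
      · rw [if_pos hi]
        refine ENNReal.rpow_le_rpow ?_ hq0.le
        exact mul_le_mul' (w_mono (habs i hi).1)
          (ENNReal.rpow_le_rpow (hVle i) (by positivity))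
      · rw [if_neg hi]
        have hv0 : V i = 0 := by
          by_contra hcon
          exact hi (hsupp i hcon)
        rw [hv0, ENNReal.zero_rpow_of_pos (by positivity), mul_zero,
          ENNReal.zero_rpow_of_pos hq0]
    have hterm2 : ∀ i : ℤ, (w ((i:ℝ)*(-α)) * V i ^ (1/p')) ^ q' ≤
        (if i = M+1 ∨ i = M+2 ∨ i = M+3 then (A' * ρ') ^ q' else 0) := by
      intro i
      by_cases hi : i = M+1 ∨ i = M+2 ∨ i = M+3
      · rw [if_pos hi]
        refine ENNReal.rpow_le_rpow ?_ hq'0.le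
        exact mul_le_mul' (w_mono (habs i hi).2)
          (ENNReal.rpow_le_rpow (hVle i) (by positivity))
      · rw [if_neg hi]
        have hv0 : V i = 0 := by
          by_contra hcon
          exact hi (hsupp i hcon)
        rw [hv0, ENNReal.zero_rpow_of_pos (by positivity), mul_zero,
          ENNReal.zero_rpow_of_pos hq'0]
    have htsum3 : ∀ B : ℝ≥0∞,
        (∑' i : ℤ, if i = M+1 ∨ i = M+2 ∨ i = M+3 then B else 0) ≤ 3 * B := by
      intro B
      have hsum : (∑' i : ℤ, if i = M+1 ∨ i = M+2 ∨ i = M+3 then B else 0) =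
          ∑ i ∈ ({M+1, M+2, M+3} : Finset ℤ),
            (if i = M+1 ∨ i = M+2 ∨ i = M+3 then B else 0) := by
        refine tsum_eq_sum ?_
        intro i hi
        simp only [Finset.mem_insert, Finset.mem_singleton] at hi
        rw [if_neg]
        tauto
      rw [hsum]
      refine le_trans (Finset.sum_le_card_nsmul _ _ B ?_) ?_
      · intro i _
        split_ifs <;> simp
      · rw [nsmul_eq_mul]
        refine mul_le_mul_left ?_ _
        norm_cast
        refine le_trans (Finset.card_insert_le _ _) (Nat.succ_le_succ ?_)
        refine le_trans (Finset.card_insert_le _ _) (Nat.succ_le_succ ?_)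
        simp
    have hK1 : K1 n α p q (cube n x r) ≤ (3:ℝ≥0∞) ^ (1/q) * (A * ρ) := by
      rw [K1]
      calc (∑' i : ℤ, (w ((i:ℝ)*α) * V i ^ (1/p)) ^ q) ^ (1/q)
          ≤ (3 * (A * ρ) ^ q) ^ (1/q) := by
            refine ENNReal.rpow_le_rpow ?_ (by positivity)
            exact le_trans (ENNReal.tsum_le_tsum hterm1) (htsum3 _)
        _ = (3:ℝ≥0∞) ^ (1/q) * (A * ρ) := by
            rw [ENNReal.mul_rpow_of_nonneg _ _ (by positivity : (0:ℝ) ≤ 1/q),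
              ← ENNReal.rpow_mul, mul_one_div, div_self hq0.ne', ENNReal.rpow_one]
    have hK2 : K1 n (-α) p' q' (cube n x r) ≤ (3:ℝ≥0∞) ^ (1/q') * (A' * ρ') := by
      rw [K1]
      calc (∑' i : ℤ, (w ((i:ℝ)*(-α)) * V i ^ (1/p')) ^ q') ^ (1/q')
          ≤ (3 * (A' * ρ') ^ q') ^ (1/q') := by
            refine ENNReal.rpow_le_rpow ?_ (by positivity)
            exact le_trans (ENNReal.tsum_le_tsum hterm2) (htsum3 _)
        _ = (3:ℝ≥0∞) ^ (1/q') * (A' * ρ') := by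
            rw [ENNReal.mul_rpow_of_nonneg _ _ (by positivity : (0:ℝ) ≤ 1/q'),
              ← ENNReal.rpow_mul, mul_one_div, div_self hq'0.ne', ENNReal.rpow_one]
    have h3 : (3:ℝ≥0∞) ^ (1/q) * (3:ℝ≥0∞) ^ (1/q') = 3 := by
      rw [← ENNReal.rpow_add _ _ (by norm_num) (by norm_num), one_div, one_div,
        hqc.inv_add_inv_eq_one, ENNReal.rpow_one]
    have hAA : A * A' = w (4*|α|) := by
      rw [hA, hA', w_mul]
      congr 1
      ring
    have hρρ : ρ * ρ' = ENNReal.ofReal r ^ n := by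
      rw [hρ, hρ', ← ENNReal.rpow_add _ _ ?h1 ?h2, one_div, one_div,
        hpc.inv_add_inv_eq_one, ENNReal.rpow_one]
      case h1 =>
        refine pow_ne_zero n ?_
        simpa using hr
      case h2 => exact ENNReal.pow_ne_top ENNReal.ofReal_ne_top
    calc K1 n α p q (cube n x r) * K1 n (-α) p' q' (cube n x r)
        ≤ ((3:ℝ≥0∞) ^ (1/q) * (A * ρ)) * ((3:ℝ≥0∞) ^ (1/q') * (A' * ρ')) :=
          mul_le_mul' hK1 hK2
      _ = ((3:ℝ≥0∞) ^ (1/q) * (3:ℝ≥0∞) ^ (1/q')) * (A * A') * (ρ * ρ') := by ring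
      _ = C2 * ENNReal.ofReal r ^ n := by rw [h3, hAA, hρρ, hC2]
      _ ≤ (C1 + C2) * ENNReal.ofReal r ^ n := mul_le_mul_left le_add_self _

end HP

open HP in

/-- `‖χ_R‖_{K̇_{p,q}^{α}} · ‖χ_R‖_{K̇_{p',q'}^{−α}} ≈ |R|` for all rectangles. -/
theorem herz_char_duality_product (n m : ℕ) (hn : 0 < n) (hm : 0 < m) (α p q : ℝ)
    (hp : 1 < p) (hq : 1 < q)
    (hα₁ : -(n:ℝ)/p < α) (hα₂ : -(m:ℝ)/p < α)
    (hα₃ : α < (n:ℝ) * (1 - 1/p)) (hα₄ : α < (m:ℝ) * (1 - 1/p)) :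
    ∃ c C : ℝ≥0, 0 < c ∧
      ∀ (x : Fin n → ℝ) (y : Fin m → ℝ) (r s : ℝ), 0 < r → 0 < s →
        (c : ℝ≥0∞) * volume (rect n m x y r s) ≤
          herzNormR n m α p q (herzChar n m (rect n m x y r s)) *
            herzNormR n m (-α) (rconj p) (rconj q) (herzChar n m (rect n m x y r s)) ∧
        herzNormR n m α p q (herzChar n m (rect n m x y r s)) *
            herzNormR n m (-α) (rconj p) (rconj q) (herzChar n m (rect n m x y r s)) ≤
          (C : ℝ≥0∞) * volume (rect n m x y r s) := by
  have hp0 : (0:ℝ) < p := lt_trans one_pos hp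
  have hq0 : (0:ℝ) < q := lt_trans one_pos hq
  have hpc : p.HolderConjugate (rconj p) := by
    exact (Real.holderConjugate_iff_eq_conjExponent hp).2 rfl
  have hqc : q.HolderConjugate (rconj q) := by
    exact (Real.holderConjugate_iff_eq_conjExponent hq).2 rfl
  have h1p' : 1/(rconj p) = 1 - 1/p := by
    have := hpc.inv_add_inv_eq_one
    rw [one_div, one_div]
    linarith
  have hbn : 0 < α + (n:ℝ)/p := by
    rw [neg_div] at hα₁
    linarith
  have hbm : 0 < α + (m:ℝ)/p := by
    rw [neg_div] at hα₂
    linarith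
  have hbn' : 0 < -α + (n:ℝ)/(rconj p) := by
    have hnd : (n:ℝ)/(rconj p) = n * (1 - 1/p) := by
      rw [div_eq_mul_one_div, h1p']
    rw [hnd]
    linarith
  have hbm' : 0 < -α + (m:ℝ)/(rconj p) := by
    have hmd : (m:ℝ)/(rconj p) = m * (1 - 1/p) := by
      rw [div_eq_mul_one_div, h1p']
    rw [hmd]
    linarith
  obtain ⟨Cn, hCn, hCnb⟩ := upper1D hn hpc hqc hbn hbn'
  obtain ⟨Cm, hCm, hCmb⟩ := upper1D hm hpc hqc hbm hbm'
  refine ⟨1, (Cn * Cm).toNNReal, one_pos, ?_⟩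
  intro x y r s hr hs
  have hvol : volume (rect n m x y r s) = ENNReal.ofReal r ^ n * ENNReal.ofReal s ^ m := by
    rw [rect, Measure.volume_eq_prod, Measure.prod_prod, volume_cube, volume_cube]
  have hEq1 : herzNormR n m α p q (herzChar n m (rect n m x y r s)) =
      K1 n α p q (cube n x r) * K1 m α p q (cube m y s) :=
    herzNormR_rect hp0 hq0 x y r s
  have hEq2 : herzNormR n m (-α) (rconj p) (rconj q) (herzChar n m (rect n m x y r s)) =
      K1 n (-α) (rconj p) (rconj q) (cube n x r) *
        K1 m (-α) (rconj p) (rconj q) (cube m y s) :=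
    herzNormR_rect hpc.symm.pos hqc.symm.pos x y r s
  have hrearr : (K1 n α p q (cube n x r) * K1 m α p q (cube m y s)) *
      (K1 n (-α) (rconj p) (rconj q) (cube n x r) *
        K1 m (-α) (rconj p) (rconj q) (cube m y s)) =
      (K1 n α p q (cube n x r) * K1 n (-α) (rconj p) (rconj q) (cube n x r)) *
      (K1 m α p q (cube m y s) * K1 m (-α) (rconj p) (rconj q) (cube m y s)) := by ring
  constructor
  · -- lower bound
    have l1 := lower1D hn (α := α) hpc hqc (measurableSet_cube n x r)
      (by rw [volume_cube]; exact ENNReal.pow_ne_top ENNReal.ofReal_ne_top)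
    have l2 := lower1D hm (α := α) hpc hqc (measurableSet_cube m y s)
      (by rw [volume_cube]; exact ENNReal.pow_ne_top ENNReal.ofReal_ne_top)
    rw [hEq1, hEq2, hrearr]
    calc ((1:ℝ≥0) : ℝ≥0∞) * volume (rect n m x y r s)
        = volume (cube n x r) * volume (cube m y s) := by
          rw [ENNReal.coe_one, one_mul, rect, Measure.volume_eq_prod, Measure.prod_prod]
      _ ≤ _ := mul_le_mul' l1 l2
  · -- upper bound
    rw [hEq1, hEq2, hrearr]
    have u1 := hCnb x r hr
    have u2 := hCmb y s hs
    calc (K1 n α p q (cube n x r) * K1 n (-α) (rconj p) (rconj q) (cube n x r)) *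
        (K1 m α p q (cube m y s) * K1 m (-α) (rconj p) (rconj q) (cube m y s))
        ≤ (Cn * ENNReal.ofReal r ^ n) * (Cm * ENNReal.ofReal s ^ m) := mul_le_mul' u1 u2
      _ = (Cn * Cm) * volume (rect n m x y r s) := by rw [hvol]; ring
      _ = (((Cn * Cm).toNNReal : ℝ≥0) : ℝ≥0∞) * volume (rect n m x y r s) := by
          rw [ENNReal.coe_toNNReal (ENNReal.mul_ne_top hCn hCm)]
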